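/- Let r ≥ 1, a_1,...,a_r > 0, reals p_1 < ... < p_r, and φ(t) = Σ_{i=1}^r a_i t^(p_i/2-1) for t > 0. Then for all t > 0, 0 ≤ 2t δ_φ'(t) ≤ (p_r - p_1)²/2, where δ_φ(t) = 2tφ'(t)/φ(t). -/

import Mathlib

open Finset Real Filter

lemma weighted_aux (r : ℕ) (hr : 1 ≤ r) (a q : Fin r → ℝ) (ha : ∀ i, 0 < a i)
    (hq : Monotone q) (t : ℝ) (ht : 0 < t) :
    0 ≤ 2 * t * deriv (fun s : ℝ =>
        2 * s * deriv (fun u : ℝ => ∑ i, a i * u ^ (q i)) s /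
          (∑ i, a i * s ^ (q i))) t ∧
    2 * t * deriv (fun s : ℝ =>
        2 * s * deriv (fun u : ℝ => ∑ i, a i * u ^ (q i)) s /
          (∑ i, a i * s ^ (q i))) t ≤ (q ⟨r - 1, Nat.sub_lt hr Nat.one_pos⟩ - q ⟨0, hr⟩) ^ 2 := by
  haveI : Nonempty (Fin r) := ⟨⟨0, by omega⟩⟩
  have ht' : t ≠ 0 := ne_of_gt ht
  set F : ℝ → ℝ := fun s => ∑ i, a i * s ^ (q i) with hF
  set F1 : ℝ → ℝ := fun s => ∑ i, a i * q i * s ^ (q i) with hF1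
  set F2 : ℝ → ℝ := fun s => ∑ i, a i * q i ^ 2 * s ^ (q i) with hF2
  have hFpos : ∀ s : ℝ, 0 < s → 0 < F s := by
    intro s hs
    exact Finset.sum_pos (fun i _ => mul_pos (ha i) (Real.rpow_pos_of_pos hs _))
      Finset.univ_nonempty
  have hdF : ∀ s : ℝ, 0 < s → HasDerivAt F (F1 s / s) s := by
    intro s hs
    have h : HasDerivAt F (∑ i, a i * (q i * s ^ (q i - 1))) s := by
      apply HasDerivAt.fun_sum
      intro i _
      exact (Real.hasDerivAt_rpow_const (Or.inl hs.ne')).const_mul (a i)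
    convert h using 1
    rw [hF1]
    simp only [Finset.sum_div]
    apply Finset.sum_congr rfl
    intro i _
    rw [Real.rpow_sub_one hs.ne']
    ring
  have hdF1 : HasDerivAt F1 (F2 t / t) t := by
    have h : HasDerivAt F1 (∑ i, a i * q i * (q i * t ^ (q i - 1))) t := by
      apply HasDerivAt.fun_sum
      intro i _
      exact (Real.hasDerivAt_rpow_const (Or.inl ht')).const_mul (a i * q i)
    convert h using 1
    rw [hF2]
    simp only [Finset.sum_div]
    apply Finset.sum_congr rfl
    intro i _
    rw [Real.rpow_sub_one ht']
    ring
  have hev : (fun s : ℝ => 2 * s * deriv (fun u : ℝ => ∑ i, a i * u ^ (q i)) s /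
      (∑ i, a i * s ^ (q i))) =ᶠ[nhds t] (fun s => 2 * F1 s / F s) := by
    filter_upwards [eventually_gt_nhds ht] with s hs
    have hds : deriv F s = F1 s / s := (hdF s hs).deriv
    show 2 * s * deriv F s / F s = 2 * F1 s / F s
    rw [hds]
    congr 1
    field_simp
  have hFt : F t ≠ 0 := (hFpos t ht).ne'
  have hG : HasDerivAt (fun s => 2 * F1 s / F s)
      ((2 * (F2 t / t) * F t - 2 * F1 t * (F1 t / t)) / (F t) ^ 2) t :=
    (hdF1.const_mul 2).div (hdF t ht) hFt
  set E : ℝ := F2 t * F t - F1 t ^ 2 with hE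
  have hmain : 2 * t * deriv (fun s : ℝ =>
      2 * s * deriv (fun u : ℝ => ∑ i, a i * u ^ (q i)) s /
        (∑ i, a i * s ^ (q i))) t = 4 * E / (F t) ^ 2 := by
    rw [hev.deriv_eq, hG.deriv, hE]
    field_simp
    ring
  -- Cauchy-Schwarz: 0 ≤ E
  have hEnn : 0 ≤ E := by
    have cs := Finset.sum_mul_sq_le_sq_mul_sq Finset.univ
      (fun i => Real.sqrt (a i * t ^ (q i))) (fun i => q i * Real.sqrt (a i * t ^ (q i)))
    have h1 : ∀ i : Fin r, Real.sqrt (a i * t ^ (q i)) ^ 2 = a i * t ^ (q i) := fun i =>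
      Real.sq_sqrt (le_of_lt (mul_pos (ha i) (Real.rpow_pos_of_pos ht _)))
    have e1 : (∑ i, Real.sqrt (a i * t ^ (q i)) *
        (q i * Real.sqrt (a i * t ^ (q i)))) = F1 t := by
      apply Finset.sum_congr rfl
      intro i _
      calc Real.sqrt (a i * t ^ (q i)) * (q i * Real.sqrt (a i * t ^ (q i)))
          = q i * Real.sqrt (a i * t ^ (q i)) ^ 2 := by ring
        _ = a i * q i * t ^ (q i) := by rw [h1 i]; ring
    have e2 : (∑ i, Real.sqrt (a i * t ^ (q i)) ^ 2) = F t := by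
      apply Finset.sum_congr rfl; intro i _; rw [h1 i]
    have e3 : (∑ i, (q i * Real.sqrt (a i * t ^ (q i))) ^ 2) = F2 t := by
      apply Finset.sum_congr rfl
      intro i _
      rw [mul_pow, h1 i]
      ring
    rw [e1, e2, e3] at cs
    rw [hE]; nlinarith
  -- Upper bound
  set i0 : Fin r := ⟨0, by omega⟩
  set il : Fin r := ⟨r - 1, by omega⟩
  set c : ℝ := (q i0 + q il) / 2 with hc
  set R : ℝ := q il - q i0 with hR
  have hqb : ∀ i : Fin r, q i0 ≤ q i ∧ q i ≤ q il := by
    intro i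
    constructor
    · exact hq (by simp [i0, Fin.le_def])
    · exact hq (by simp [il, Fin.le_def]; omega)
  have h1 : (∑ i, a i * (q i - c) ^ 2 * t ^ (q i))
      = F2 t - 2 * c * F1 t + c ^ 2 * F t := by
    rw [hF2, hF1, hF, Finset.mul_sum, Finset.mul_sum, ← Finset.sum_sub_distrib,
      ← Finset.sum_add_distrib]
    apply Finset.sum_congr rfl
    intro i _
    ring
  have h2 : (∑ i, a i * (q i - c) ^ 2 * t ^ (q i)) ≤ (R / 2) ^ 2 * F t := by
    rw [hF, Finset.mul_sum]
    apply Finset.sum_le_sum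
    intro i _
    have hb := hqb i
    have h3 : (q i - c) ^ 2 ≤ (R / 2) ^ 2 := by
      rw [hc, hR]; nlinarith [hb.1, hb.2]
    have hpos : (0:ℝ) < t ^ (q i) := Real.rpow_pos_of_pos ht _
    calc a i * (q i - c) ^ 2 * t ^ (q i) = (q i - c) ^ 2 * (a i * t ^ (q i)) := by ring
      _ ≤ (R / 2) ^ 2 * (a i * t ^ (q i)) :=
          mul_le_mul_of_nonneg_right h3 (le_of_lt (mul_pos (ha i) hpos))
  have hEup : E ≤ R ^ 2 / 4 * (F t) ^ 2 := by
    have hsq : 0 ≤ (F1 t - c * F t) ^ 2 := sq_nonneg _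
    have : E = (F2 t - 2 * c * F1 t + c ^ 2 * F t) * F t - (F1 t - c * F t) ^ 2 := by
      rw [hE]; ring
    rw [this]
    have := hFpos t ht
    nlinarith [h1, h2]
  rw [hmain]
  have hF2pos : 0 < (F t) ^ 2 := by positivity
  constructor
  · positivity
  · rw [div_le_iff₀ hF2pos]
    have hRnn : 0 ≤ R := by have := hqb il; linarith [(hqb il).1]
    have : (q il - q i0) ^ 2 = R ^ 2 := by rw [hR]
    rw [this]
    nlinarith [hEup, hF2pos]

/-- For φ(t) = Σ aᵢ t^(pᵢ/2-1) with aᵢ > 0 and p₁ < ... < p_r,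
one has 0 ≤ 2t δ_φ'(t) ≤ (p_r - p₁)²/2 for all t > 0, where δ_φ(t) = 2tφ'(t)/φ(t). -/
theorem weighted_p_laplacian_degree_deriv_bounds (r : ℕ) (hr : 1 ≤ r)
    (a p : Fin r → ℝ) (ha : ∀ i, 0 < a i) (hp : StrictMono p) :
    ∀ t : ℝ, 0 < t →
      0 ≤ 2 * t * deriv (fun s : ℝ =>
          2 * s * deriv (fun u : ℝ => ∑ i, a i * u ^ (p i / 2 - 1)) s /
            (∑ i, a i * s ^ (p i / 2 - 1))) t ∧
      2 * t * deriv (fun s : ℝ =>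
          2 * s * deriv (fun u : ℝ => ∑ i, a i * u ^ (p i / 2 - 1)) s /
            (∑ i, a i * s ^ (p i / 2 - 1))) t ≤
        (p ⟨r - 1, by omega⟩ - p ⟨0, by omega⟩) ^ 2 / 2 := by
  intro t ht
  have hmono : Monotone (fun i : Fin r => p i / 2 - 1) := by
    intro i j h
    have := hp.monotone h
    simp only
    linarith
  have H := weighted_aux r hr a (fun i => p i / 2 - 1) ha hmono t ht
  refine ⟨H.1, H.2.trans ?_⟩
  have : ((fun i : Fin r => p i / 2 - 1) ⟨r - 1, by omega⟩ -
      (fun i : Fin r => p i / 2 - 1) ⟨0, by omega⟩) ^ 2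
      = (p ⟨r - 1, by omega⟩ - p ⟨0, by omega⟩) ^ 2 / 4 := by
    simp only
    ring
  rw [this]
  nlinarith [sq_nonneg (p (⟨r - 1, by omega⟩ : Fin r) - p ⟨0, by omega⟩)]
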